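/- Let T be a spanning tree of a finite connected simple graph rooted at r, with its vertex set partitioned into k fragments F_1, …, F_k, each inducing a connected subgraph of T. Call a vertex v a merging node if v has two distinct children x and y in T such that x↓ contains some fragment entirely and y↓ contains some fragment entirely. Then the number of merging nodes is at most k − 1. -/

import Mathlib

open Finset
open scoped Classical

noncomputable section

variable {V : Type*} [Fintype V] [DecidableEq V]

/-- `Desc T r v u` : `u` is a descendant of `v` in the tree `T` rooted at `r`,
i.e. `v` lies on the unique path in `T` from `r` to `u` (includes `u = v`). -/
def Desc (T : SimpleGraph V) (r v u : V) : Prop :=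
  ∀ p : T.Walk r u, p.IsPath → v ∈ p.support

/-- `descSet T r v` is `v↓`, the set of descendants of `v` in `T` rooted at `r`. -/
def descSet (T : SimpleGraph V) (r v : V) : Set V := {u | Desc T r v u}

/-- `IsLCA T r z x y` : `z` is the least common ancestor of `x` and `y` in `T`
rooted at `r`: `z` is a common ancestor of maximal depth (distance from `r`). -/
def IsLCA (T : SimpleGraph V) (r z x y : V) : Prop :=
  Desc T r z x ∧ Desc T r z y ∧
    ∀ u, Desc T r u x → Desc T r u y → T.dist r u ≤ T.dist r z

/-- `cutw G w S` : total weight of edges of `G` with exactly one endpoint in `S`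
(each such edge `{x,y}` with `x ∈ S`, `y ∉ S` is counted once, as the ordered
pair `(x, y)`). -/
def cutw (G : SimpleGraph V) (w : V → V → ℝ) (S : Set V) : ℝ :=
  ∑ x, ∑ y, if x ∈ S ∧ y ∉ S ∧ G.Adj x y then w x y else 0

/-- `degw G w v` : the weighted degree `δ(v)` of `v` in `G`. -/
def degw (G : SimpleGraph V) (w : V → V → ℝ) (v : V) : ℝ :=
  ∑ u, if G.Adj u v then w u v else 0

/-- `rhoLCA G T w r v` : `ρ(v)`, the total weight of edges of `G` whose
endpoints' least common ancestor in `T` (rooted at `r`) is `v`.  Each edge is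
counted as two ordered pairs, whence the division by `2`. -/
def rhoLCA (G T : SimpleGraph V) (w : V → V → ℝ) (r v : V) : ℝ :=
  (∑ x, ∑ y, if G.Adj x y ∧ IsLCA T r v x y then w x y else 0) / 2

/-- `degDown G T w r v` : `δ↓(v) = Σ_{u ∈ v↓} δ(u)`. -/
def degDown (G T : SimpleGraph V) (w : V → V → ℝ) (r v : V) : ℝ :=
  ∑ u, if Desc T r v u then degw G w u else 0

/-- `rhoDown G T w r v` : `ρ↓(v) = Σ_{u ∈ v↓} ρ(u)`. -/
def rhoDown (G T : SimpleGraph V) (w : V → V → ℝ) (r v : V) : ℝ :=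
  ∑ u, if Desc T r v u then rhoLCA G T w r u else 0

section Helpers
open SimpleGraph
set_option linter.unusedSectionVars false

lemma takeUntil_cons' {G : SimpleGraph V} {a c b w : V} (h : G.Adj a c) (p : G.Walk c b)
    (hw : w ∈ (Walk.cons h p).support) (hwa : a ≠ w) (hw' : w ∈ p.support) :
    (Walk.cons h p).takeUntil w hw = Walk.cons h (p.takeUntil w hw') := by
  rw [Walk.takeUntil]
  simp [hwa]

lemma mem_takeUntil_or {G : SimpleGraph V} {a b v w : V} (p : G.Walk a b)
    (hv : v ∈ p.support) (hw : w ∈ p.support) :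
    v ∈ (p.takeUntil w hw).support ∨ w ∈ (p.takeUntil v hv).support := by
  induction p with
  | nil =>
    left
    rw [Walk.mem_support_nil_iff] at hv hw
    subst hv; subst hw
    exact Walk.end_mem_support _
  | @cons a c b h p ih =>
    by_cases hva : v = a
    · subst hva; exact Or.inl (Walk.start_mem_support _)
    by_cases hwa : w = a
    · subst hwa; exact Or.inr (Walk.start_mem_support _)
    have hv' : v ∈ p.support := by
      have : v = a ∨ v ∈ p.support := by simpa using hv
      exact this.resolve_left hva
    have hw' : w ∈ p.support := by
      have : w = a ∨ w ∈ p.support := by simpa using hw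
      exact this.resolve_left hwa
    rw [takeUntil_cons' h p hw (Ne.symm hwa) hw', takeUntil_cons' h p hv (Ne.symm hva) hv']
    rcases ih hv' hw' with h1 | h1
    · exact Or.inl (by simp [Walk.support_cons, h1])
    · exact Or.inr (by simp [Walk.support_cons, h1])

lemma isPath_append_takeUntil {G : SimpleGraph V} {a b c y : V} {q : G.Walk a b}
    {d : G.Walk b c} (h : (q.append d).IsPath) (hy : y ∈ d.support) :
    (q.append (d.takeUntil y hy)).IsPath := by
  rw [Walk.isPath_def] at h ⊢
  rw [Walk.support_append] at h ⊢
  have hpre : (d.takeUntil y hy).support.tail.Sublist d.support.tail := by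
    have := d.take_spec hy
    have h2 : d.support = (d.takeUntil y hy).support ++ (d.dropUntil y hy).support.tail := by
      rw [← Walk.support_append, this]
    rw [h2, List.tail_append_of_ne_nil (Walk.support_ne_nil _)]
    exact List.sublist_append_left _ _
  exact List.Nodup.sublist (hpre.append_left q.support) h

variable {T : SimpleGraph V} {r : V}

def thePath (hT : T.IsTree) (r u : V) : T.Walk r u := (hT.existsUnique_path r u).choose

lemma thePath_isPath (hT : T.IsTree) (r u : V) : (thePath hT r u).IsPath :=
  (hT.existsUnique_path r u).choose_spec.1

lemma eq_thePath (hT : T.IsTree) {u : V} (p : T.Walk r u) (hp : p.IsPath) :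
    p = thePath hT r u :=
  (hT.existsUnique_path r u).choose_spec.2 p hp

lemma desc_iff (hT : T.IsTree) {v u : V} :
    Desc T r v u ↔ v ∈ (thePath hT r u).support := by
  constructor
  · exact fun h => h _ (thePath_isPath hT r u)
  · intro h p hp
    rw [eq_thePath hT p hp]; exact h

lemma desc_refl (hT : T.IsTree) (u : V) : Desc T r u u :=
  (desc_iff hT).2 (Walk.end_mem_support _)

lemma desc_root (hT : T.IsTree) (u : V) : Desc T r r u :=
  (desc_iff hT).2 (Walk.start_mem_support _)

lemma eq_root_of_desc_root (hT : T.IsTree) {v : V} (h : Desc T r v r) : v = r := by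
  have : (Walk.nil : T.Walk r r) = thePath hT r r := eq_thePath hT _ (by simp)
  have h2 := (desc_iff hT).1 h
  rw [← this] at h2
  simpa using h2

lemma desc_trans (hT : T.IsTree) {v w u : V} (h1 : Desc T r v w) (h2 : Desc T r w u) :
    Desc T r v u := by
  rw [desc_iff hT] at h1 ⊢
  have hw := (desc_iff hT).1 h2
  have htp : (thePath hT r u).takeUntil w hw = thePath hT r w :=
    eq_thePath hT _ ((thePath_isPath hT r u).takeUntil hw)
  rw [← htp] at h1
  exact Walk.support_takeUntil_subset _ hw h1

lemma length_lt_of_desc (hT : T.IsTree) {v u : V} (h : Desc T r v u) (hne : v ≠ u) :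
    (thePath hT r v).length < (thePath hT r u).length := by
  have hmem := (desc_iff hT).1 h
  have hsp := (thePath hT r u).take_spec hmem
  have htp : (thePath hT r u).takeUntil v hmem = thePath hT r v :=
    eq_thePath hT _ ((thePath_isPath hT r u).takeUntil hmem)
  have hlen : (thePath hT r u).length
      = (thePath hT r v).length + ((thePath hT r u).dropUntil v hmem).length := by
    conv_lhs => rw [← hsp]
    rw [Walk.length_append, htp]
  have hpos : 0 < ((thePath hT r u).dropUntil v hmem).length := by
    rw [← Walk.not_nil_iff_lt_length]
    exact Walk.not_nil_of_ne hne
  omega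

lemma desc_antisymm (hT : T.IsTree) {v u : V} (h1 : Desc T r v u) (h2 : Desc T r u v) :
    v = u := by
  by_contra hne
  have := length_lt_of_desc hT h1 hne
  have := length_lt_of_desc hT h2 (Ne.symm hne)
  omega

lemma desc_total (hT : T.IsTree) {v w u : V} (h1 : Desc T r v u) (h2 : Desc T r w u) :
    Desc T r v w ∨ Desc T r w v := by
  have hv := (desc_iff hT).1 h1
  have hw := (desc_iff hT).1 h2
  rcases mem_takeUntil_or _ hv hw with h | h
  · left
    rw [desc_iff hT, ← eq_thePath hT _ ((thePath_isPath hT r u).takeUntil hw)]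
    exact h
  · right
    rw [desc_iff hT, ← eq_thePath hT _ ((thePath_isPath hT r u).takeUntil hv)]
    exact h

lemma isPath_concat {G : SimpleGraph V} {a b c : V} {p : G.Walk a b} (hp : p.IsPath)
    (h : G.Adj b c) (hc : c ∉ p.support) : (p.concat h).IsPath := by
  rw [Walk.isPath_def, Walk.support_concat]
  exact List.Nodup.append (Walk.isPath_def _ |>.1 hp) (by simp) (by simpa using fun h' => hc h')

lemma thePath_child (hT : T.IsTree) {v x : V} (hadj : T.Adj v x) (hd : Desc T r v x) :
    thePath hT r x = (thePath hT r v).concat hadj := by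
  have hx : x ∉ (thePath hT r v).support := by
    intro hmem
    have : Desc T r x v := (desc_iff hT).2 hmem
    exact hadj.ne (desc_antisymm hT hd this)
  exact (eq_thePath hT _ (isPath_concat (thePath_isPath hT r v) hadj hx)).symm

lemma length_child (hT : T.IsTree) {v x : V} (hadj : T.Adj v x) (hd : Desc T r v x) :
    (thePath hT r x).length = (thePath hT r v).length + 1 := by
  rw [thePath_child hT hadj hd, Walk.length_concat]

lemma child_eq (hT : T.IsTree) {v x y a : V} (hx : T.Adj v x) (dx : Desc T r v x)
    (hy : T.Adj v y) (dy : Desc T r v y) (ha : Desc T r x a) (hb : Desc T r y a) :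
    x = y := by
  rcases desc_total hT ha hb with h | h
  · by_contra hne
    have := length_lt_of_desc hT h hne
    rw [length_child hT hx dx, length_child hT hy dy] at this
    omega
  · by_contra hne
    have := length_lt_of_desc hT h (Ne.symm hne)
    rw [length_child hT hx dx, length_child hT hy dy] at this
    omega

lemma child_ne_root (hT : T.IsTree) {v x : V} (hadj : T.Adj v x) (hd : Desc T r v x) :
    x ≠ r := by
  intro hx
  subst hx
  exact hadj.ne (eq_root_of_desc_root hT hd)

lemma exists_child (hT : T.IsTree) {v u : V} (hd : Desc T r v u) (hne : v ≠ u) :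
    ∃ x, T.Adj v x ∧ Desc T r v x ∧ Desc T r x u := by
  have hmem := (desc_iff hT).1 hd
  set p := thePath hT r u with hp
  have hdrop : (p.dropUntil v hmem).IsPath := (thePath_isPath hT r u).dropUntil hmem
  have hnn : ¬(p.dropUntil v hmem).Nil := Walk.not_nil_of_ne hne
  obtain ⟨x, hadj, q, heq⟩ := Walk.not_nil_iff.1 hnn
  have hxd : x ∈ (p.dropUntil v hmem).support := by
    rw [heq]
    simp [Walk.support_cons, Walk.start_mem_support]
  refine ⟨x, hadj, ?_, (desc_iff hT).2 (Walk.support_dropUntil_subset _ hmem hxd)⟩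
  have hpath : ((p.takeUntil v hmem).append ((p.dropUntil v hmem).takeUntil x hxd)).IsPath := by
    apply isPath_append_takeUntil
    rw [p.take_spec hmem]
    exact thePath_isPath hT r u
  rw [desc_iff hT, ← eq_thePath hT _ hpath]
  rw [Walk.mem_support_append_iff]
  exact Or.inl (Walk.end_mem_support _)

lemma parent_unique (hT : T.IsTree) {v v' x : V} (h1 : T.Adj v x) (h2 : Desc T r v x)
    (h1' : T.Adj v' x) (h2' : Desc T r v' x) : v = v' := by
  have e1 := thePath_child hT h1 h2
  have e2 := thePath_child hT h1' h2'
  rw [e1] at e2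
  obtain ⟨hv, -⟩ := Walk.concat_inj e2
  exact hv

lemma exists_parent (hT : T.IsTree) {x : V} (hx : x ≠ r) :
    ∃ v, T.Adj v x ∧ Desc T r v x := by
  have hnn : ¬(thePath hT r x).reverse.Nil := Walk.not_nil_of_ne hx
  obtain ⟨v, hadj, q, heq⟩ := Walk.not_nil_iff.1 hnn
  refine ⟨v, hadj.symm, (desc_iff hT).2 ?_⟩
  have : v ∈ (thePath hT r x).reverse.support := by
    rw [heq]
    simp [Walk.support_cons, Walk.start_mem_support]
  rwa [Walk.support_reverse, List.mem_reverse] at this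

set_option linter.unusedSectionVars false

/-- Adjacent vertices strictly below `v` lie in the same child subtree. -/
lemma adj_same_child (hT : T.IsTree) {v x a b : V} (hvx : T.Adj v x) (hdvx : Desc T r v x)
    (hxa : Desc T r x a) (hab : T.Adj a b) (hvb : Desc T r v b) (hbv : b ≠ v) :
    Desc T r x b := by
  by_cases hba : Desc T r b a
  · obtain ⟨y, hvy, hdvy, hyb⟩ := exists_child hT hvb (Ne.symm hbv)
    have hya : Desc T r y a := desc_trans hT hyb hba
    have hxy : x = y := child_eq hT hvx hdvx hvy hdvy hxa hya
    rw [hxy]; exact hyb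
  · have hbmem : b ∉ (thePath hT r a).support := fun h => hba ((desc_iff hT).2 h)
    have hpath : ((thePath hT r a).concat hab).IsPath :=
      isPath_concat (thePath_isPath hT r a) hab hbmem
    have hPb : thePath hT r b = (thePath hT r a).concat hab := (eq_thePath hT _ hpath).symm
    rw [desc_iff hT, hPb, Walk.support_concat, List.mem_append]
    exact Or.inl ((desc_iff hT).1 hxa)

/-- A connected set of vertices contained in `v↓ \ {v}` lies in a single child subtree. -/
lemma frag_in_child (hT : T.IsTree) {v : V} {s : Set V}
    (hconn : (T.induce s).Connected) (hsne : s.Nonempty)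
    (hs : s ⊆ descSet T r v) (hv : v ∉ s) :
    ∃ x, T.Adj v x ∧ Desc T r v x ∧ s ⊆ descSet T r x := by
  obtain ⟨u0, hu0⟩ := hsne
  have hdu0 : Desc T r v u0 := hs hu0
  have hne : v ≠ u0 := fun h => hv (h ▸ hu0)
  obtain ⟨x, hvx, hdvx, hxu0⟩ := exists_child hT hdu0 hne
  refine ⟨x, hvx, hdvx, ?_⟩
  intro u hu
  have aux : ∀ (c d : s) (w : (T.induce s).Walk c d), Desc T r x c.1 → Desc T r x d.1 := by
    intro c d w
    induction w with
    | nil => exact id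
    | @cons c e d hadj w ih =>
      intro h
      apply ih
      have hTadj : T.Adj c.1 e.1 := hadj
      exact adj_same_child hT hvx hdvx h hTadj (hs e.2) (fun he => hv (he ▸ e.2))
  obtain ⟨w⟩ := hconn.preconnected ⟨u0, hu0⟩ ⟨u, hu⟩
  exact aux _ _ w hxu0


end Helpers

/-- `v` is a merging node: it has two distinct children `x, y` in `T` (rooted
at `r`) such that both `x↓` and `y↓` entirely contain some fragment. -/
def IsMergingNode (T : SimpleGraph V) (r : V) {k : ℕ} (F : Fin k → Set V)
    (v : V) : Prop :=
  ∃ x y, x ≠ y ∧ T.Adj v x ∧ T.Adj v y ∧ Desc T r v x ∧ Desc T r v y ∧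
    (∃ j, F j ⊆ descSet T r x) ∧ (∃ j, F j ⊆ descSet T r y)

/-- for a fragment decomposition into `k` fragments of a
spanning tree `T` rooted at `r`, the number of merging nodes is at most `k − 1`. -/
theorem stmt9 (G T : SimpleGraph V) (hG : G.Connected)
    (hT : T.IsTree) (hTG : T ≤ G)
    (r : V) (k : ℕ) (F : Fin k → Set V)
    (hne : ∀ i, (F i).Nonempty)
    (hdisj : ∀ i j, i ≠ j → Disjoint (F i) (F j))
    (hcover : (⋃ i, F i) = Set.univ)
    (hconn : ∀ i, (T.induce (F i)).Connected) :
    (Finset.univ.filter (fun v => IsMergingNode T r F v)).card ≤ k - 1 := by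
  classical
  have hk : 0 < k := by
    obtain ⟨v0⟩ := hG.nonempty
    have hv0 : v0 ∈ ⋃ i, F i := by rw [hcover]; trivial
    obtain ⟨i, -⟩ := Set.mem_iUnion.1 hv0
    exact i.pos
  set A : Finset V := univ.filter (fun v => ∃ j, F j ⊆ descSet T r v) with hA
  have hrA : r ∈ A := by
    simp only [hA, mem_filter, mem_univ, true_and]
    exact ⟨⟨0, hk⟩, fun u _ => desc_root hT u⟩
  have hparex : ∀ x : V, x ≠ r → ∃ v, T.Adj v x ∧ Desc T r v x :=
    fun x hx => exists_parent hT hx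
  choose! par hpar1 hpar2 using hparex
  have hparents : ∀ {v x : V}, T.Adj v x → Desc T r v x → par x = v := by
    intro v x h1 h2
    have hxr : x ≠ r := child_ne_root hT h1 h2
    exact (parent_unique hT (hpar1 x hxr) (hpar2 x hxr) h1 h2)
  have hmapsto : ∀ x ∈ A.erase r, par x ∈ A := by
    intro x hx
    rw [mem_erase] at hx
    obtain ⟨hxr, hxA⟩ := hx
    simp only [hA, mem_filter, mem_univ, true_and] at hxA ⊢
    obtain ⟨j, hj⟩ := hxA
    exact ⟨j, fun u hu => desc_trans hT (hpar2 x hxr) (hj hu)⟩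
  set C : V → Finset V := fun v => (A.erase r).filter (fun x => par x = v) with hC
  have hsum : (A.erase r).card = ∑ v ∈ A, (C v).card :=
    card_eq_sum_card_fiberwise hmapsto
  have hmemC : ∀ {v x : V}, T.Adj v x → Desc T r v x → (∃ j, F j ⊆ descSet T r x) →
      x ∈ C v := by
    intro v x h1 h2 h3
    simp only [hC, mem_filter, mem_erase]
    refine ⟨⟨child_ne_root hT h1 h2, ?_⟩, hparents h1 h2⟩
    simp only [hA, mem_filter, mem_univ, true_and]
    exact h3
  have hineq : ∀ v ∈ A, ((if IsMergingNode T r F v then 1 else 0)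
      + (if (C v).Nonempty then 1 else 0)) ≤ (C v).card := by
    intro v _
    by_cases hm : IsMergingNode T r F v
    · obtain ⟨x, y, hxy, hvx, hvy, hdx, hdy, hjx, hjy⟩ := hm
      have hx : x ∈ C v := hmemC hvx hdx hjx
      have hy : y ∈ C v := hmemC hvy hdy hjy
      have h2 : 2 ≤ (C v).card := Finset.one_lt_card.2 ⟨x, hx, y, hy, hxy⟩
      have hnonempty : (C v).Nonempty := ⟨x, hx⟩
      rw [if_pos ⟨x, y, hxy, hvx, hvy, hdx, hdy, hjx, hjy⟩, if_pos hnonempty]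
      exact h2
    · by_cases hcv : (C v).Nonempty
      · rw [if_neg hm, if_pos hcv]
        simpa using hcv.card_pos
      · rw [if_neg hm, if_neg hcv]
        simp
  have hsum2 : ∑ v ∈ A, ((if IsMergingNode T r F v then 1 else 0)
      + (if (C v).Nonempty then 1 else 0)) ≤ (A.erase r).card := by
    rw [hsum]; exact Finset.sum_le_sum hineq
  rw [Finset.sum_add_distrib] at hsum2
  have hMsub : Finset.univ.filter (fun v => IsMergingNode T r F v)
      = A.filter (fun v => IsMergingNode T r F v) := by
    ext v
    simp only [mem_filter, mem_univ, true_and, hA]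
    constructor
    · intro hm
      refine ⟨?_, hm⟩
      obtain ⟨x, y, hxy, hvx, hvy, hdx, hdy, ⟨j, hjx⟩, -⟩ := hm
      exact ⟨j, fun u hu => desc_trans hT hdx (hjx hu)⟩
    · exact fun h => h.2
  have hMeq : ∑ v ∈ A, (if IsMergingNode T r F v then 1 else 0)
      = (Finset.univ.filter (fun v => IsMergingNode T r F v)).card := by
    rw [hMsub, Finset.card_filter]
  have hNEeq : ∑ v ∈ A, (if (C v).Nonempty then 1 else 0)
      = (A.filter (fun v => (C v).Nonempty)).card := by
    rw [Finset.card_filter]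
  set Lf := A.filter (fun v => ¬(C v).Nonempty) with hLfdef
  have hsplit : (A.filter (fun v => (C v).Nonempty)).card + Lf.card = A.card :=
    Finset.card_filter_add_card_filter_not _
  have herase : (A.erase r).card + 1 = A.card := by
    rw [Finset.card_erase_of_mem hrA]
    have : 0 < A.card := Finset.card_pos.2 ⟨r, hrA⟩
    omega
  -- the leaf injection
  have hLf : Lf.card ≤ k := by
    set φ : V → Fin k := fun v =>
      if h : ∃ j, F j ⊆ descSet T r v then Classical.choose h else ⟨0, hk⟩ with hφdef
    have hφ : ∀ v ∈ Lf, v ∈ F (φ v) ∧ F (φ v) ⊆ descSet T r v := by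
      intro v hv
      rw [hLfdef, mem_filter] at hv
      obtain ⟨hvA, hnotne⟩ := hv
      rw [hA, mem_filter] at hvA
      obtain ⟨-, hex⟩ := hvA
      have hsub : F (φ v) ⊆ descSet T r v := by
        rw [hφdef]; simp only [dif_pos hex]
        exact Classical.choose_spec hex
      refine ⟨?_, hsub⟩
      by_contra hvF
      obtain ⟨x, hvx, hdvx, hsx⟩ := frag_in_child hT (hconn _) (hne _) hsub hvF
      exact hnotne ⟨x, hmemC hvx hdvx ⟨_, hsx⟩⟩
    have hinj : Set.InjOn φ Lf := by
      intro v hv v' hv' heq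
      obtain ⟨h1, h2⟩ := hφ v hv
      obtain ⟨h1', h2'⟩ := hφ v' hv'
      have d1 : Desc T r v v' := h2 (heq ▸ h1')
      have d2 : Desc T r v' v := h2' (heq ▸ h1)
      exact desc_antisymm hT d1 d2
    calc Lf.card ≤ (Finset.univ : Finset (Fin k)).card :=
          Finset.card_le_card_of_injOn φ (fun a _ => mem_univ _) hinj
      _ = k := by simp
  omega

end
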